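/- Let H be a 3-partite 3-uniform hypergraph with vertex parts V_A, V_B, V_C and hyperedge set E ⊆ V_A × V_B × V_C, and let x0, y0, z0 be fresh elements not in V_A ∪ V_B ∪ V_C. Consider the database instance with relations A = V_A ∪ {x0}, B = V_B ∪ {y0}, C = V_C ∪ {z0}, W = E ∪ {(x0,y0,z0)}, all tuples endogenous, and the Boolean query h1* ⟵ A(x), B(y), C(z), W(x,y,z). Then the minimum size of a contingency set for the tuple x0 ∈ A equals the minimum size of a vertex cover of H; hence the responsibility of x0 is 1/(1 + τ(H)), where τ(H) is the minimum vertex-cover size of H. -/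

import Mathlib

/-- An atom of a Boolean conjunctive query: a relation symbol applied to a
tuple (list) of variables, marked endogenous (`endo = true`) or exogenous. -/
structure DBAtom (Rel Var : Type) where
  rel : Rel
  args : List Var
  endo : Bool
deriving DecidableEq

/-- A database tuple: it belongs to one relation and carries a tuple of constants. -/
structure DBTup (Rel Const : Type) where
  rel : Rel
  args : List Const
deriving DecidableEq

/-- The tuple obtained by applying a valuation `θ` to an atom. -/
def DBAtom.app {Rel Var Const : Type} (g : DBAtom Rel Var) (θ : Var → Const) :
    DBTup Rel Const :=
  ⟨g.rel, g.args.map θ⟩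

/-- `dbSat D q` holds iff `D ⊨ q`: there is a valuation `θ` of the variables of `q`
into the domain with `θ(g) ∈ D` for every atom `g` of `q`. -/
def dbSat {Rel Var Const : Type} (D : Finset (DBTup Rel Const))
    (q : Finset (DBAtom Rel Var)) : Prop :=
  ∃ θ : Var → Const, ∀ g ∈ q, g.app θ ∈ D

/-- `t` is an actual cause for `q` in `D` (with endogenous tuples `Dn`):
there is a contingency set `Γ ⊆ Dn` with `t ∉ Γ` such that
`D − Γ ⊨ q` and `D − Γ − {t} ⊭ q`. -/
def isActualCause {Rel Var Const : Type} [DecidableEq Rel] [DecidableEq Const]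
    (q : Finset (DBAtom Rel Var)) (D Dn : Finset (DBTup Rel Const))
    (t : DBTup Rel Const) : Prop :=
  ∃ Γ : Finset (DBTup Rel Const), Γ ⊆ Dn ∧ t ∉ Γ ∧
    dbSat (D \ Γ) q ∧ ¬ dbSat ((D \ Γ).erase t) q

/-- The n-lineage of `q` on `D`: the family of the sets `c^θ ∩ Dⁿ`
over all valuations `θ` with `θ(g) ∈ D` for all atoms `g` of `q`, where
`c^θ = {θ(g) : g an atom of q}`. -/
def nLineage {Rel Var Const : Type} [DecidableEq Rel] [DecidableEq Const]
    (q : Finset (DBAtom Rel Var)) (D Dn : Finset (DBTup Rel Const)) :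
    Set (Finset (DBTup Rel Const)) :=
  {c | ∃ θ : Var → Const, (∀ g ∈ q, g.app θ ∈ D) ∧
    c = (q.image fun g => g.app θ) ∩ Dn}

lemma dbSat_iff' {V : Type} [DecidableEq V] (D' : Finset (DBTup (Fin 4) V)) :
    dbSat D' ({⟨0, [0], true⟩, ⟨1, [1], true⟩, ⟨2, [2], true⟩, ⟨3, [0, 1, 2], true⟩} :
      Finset (DBAtom (Fin 4) (Fin 3))) ↔
    ∃ a b c : V, (⟨0,[a]⟩ : DBTup (Fin 4) V) ∈ D' ∧ (⟨1,[b]⟩ : DBTup (Fin 4) V) ∈ D' ∧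
      (⟨2,[c]⟩ : DBTup (Fin 4) V) ∈ D' ∧ (⟨3,[a,b,c]⟩ : DBTup (Fin 4) V) ∈ D' := by
  constructor
  · rintro ⟨θ, hθ⟩
    exact ⟨θ 0, θ 1, θ 2, hθ ⟨0,[0],true⟩ (by simp), hθ ⟨1,[1],true⟩ (by simp),
      hθ ⟨2,[2],true⟩ (by simp), hθ ⟨3,[0,1,2],true⟩ (by simp)⟩
  · rintro ⟨a, b, c, h1, h2, h3, h4⟩
    refine ⟨![a,b,c], ?_⟩
    intro g hg
    simp only [Finset.mem_insert, Finset.mem_singleton] at hg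
    rcases hg with rfl | rfl | rfl | rfl <;> simpa [DBAtom.app]

/-- Let `H` be a 3-partite 3-uniform hypergraph with vertex parts
`V_A, V_B, V_C` and hyperedge set `E ⊆ V_A × V_B × V_C`, and let `x0, y0, z0` be fresh
elements not in `V_A ∪ V_B ∪ V_C`. For the database instance with relations
`A = V_A ∪ {x0}`, `B = V_B ∪ {y0}`, `C = V_C ∪ {z0}`, `W = E ∪ {(x0,y0,z0)}`, all tuples
endogenous, and the Boolean query `h1* ⟵ A(x), B(y), C(z), W(x,y,z)` (relation symbols
`A,B,C,W` are `0,1,2,3`; variables `x,y,z` are `0,1,2`), the minimum size of a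
contingency set for the tuple `x0 ∈ A` equals the minimum size `τ(H)` of a vertex cover
of `H`; hence the responsibility of `x0` is `1/(1 + τ(H))`. -/
theorem statement11 {V : Type} [DecidableEq V]
    (VA VB VC : Finset V) (E : Finset (V × V × V))
    (hAB : Disjoint VA VB) (hAC : Disjoint VA VC) (hBC : Disjoint VB VC)
    (hE : ∀ e ∈ E, e.1 ∈ VA ∧ e.2.1 ∈ VB ∧ e.2.2 ∈ VC)
    (x0 y0 z0 : V)
    (hx0 : x0 ∉ VA ∪ VB ∪ VC) (hy0 : y0 ∉ VA ∪ VB ∪ VC) (hz0 : z0 ∉ VA ∪ VB ∪ VC) :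
    let q : Finset (DBAtom (Fin 4) (Fin 3)) :=
      {⟨0, [0], true⟩, ⟨1, [1], true⟩, ⟨2, [2], true⟩, ⟨3, [0, 1, 2], true⟩}
    let D : Finset (DBTup (Fin 4) V) :=
      (insert x0 VA).image (fun a => ⟨0, [a]⟩) ∪
      (insert y0 VB).image (fun b => ⟨1, [b]⟩) ∪
      (insert z0 VC).image (fun c => ⟨2, [c]⟩) ∪
      (insert (x0, y0, z0) E).image (fun e => ⟨3, [e.1, e.2.1, e.2.2]⟩)
    let t0 : DBTup (Fin 4) V := ⟨0, [x0]⟩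
    let contSizes : Set ℕ :=
      {n | ∃ Γ : Finset (DBTup (Fin 4) V), Γ ⊆ D ∧ t0 ∉ Γ ∧
        dbSat (D \ Γ) q ∧ ¬ dbSat ((D \ Γ).erase t0) q ∧ Γ.card = n}
    let coverSizes : Set ℕ :=
      {n | ∃ S : Finset V, S ⊆ VA ∪ VB ∪ VC ∧
        (∀ e ∈ E, e.1 ∈ S ∨ e.2.1 ∈ S ∨ e.2.2 ∈ S) ∧ S.card = n}
    sInf contSizes = sInf coverSizes ∧
      (1 : ℝ) / (1 + ((sInf contSizes : ℕ) : ℝ)) = 1 / (1 + ((sInf coverSizes : ℕ) : ℝ)) := by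
  intro q D t0 contSizes coverSizes
  classical
  simp only [Finset.mem_union] at hx0 hy0 hz0
  push_neg at hx0 hy0 hz0
  obtain ⟨⟨hxA, hxB⟩, hxC⟩ := hx0
  obtain ⟨⟨hyA, hyB⟩, hyC⟩ := hy0
  obtain ⟨⟨hzA, hzB⟩, hzC⟩ := hz0
  have hD : D = (insert x0 VA).image (fun a => (⟨0, [a]⟩ : DBTup (Fin 4) V)) ∪
      (insert y0 VB).image (fun b => ⟨1, [b]⟩) ∪
      (insert z0 VC).image (fun c => ⟨2, [c]⟩) ∪
      (insert (x0, y0, z0) E).image (fun e => ⟨3, [e.1, e.2.1, e.2.2]⟩) := rfl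
  have hDA : ∀ a : V, ((⟨0,[a]⟩ : DBTup (Fin 4) V) ∈ D) ↔ a ∈ insert x0 VA := by
    intro a; rw [hD]; constructor
    · intro h
      simp only [Finset.mem_union, Finset.mem_image] at h
      rcases h with ((⟨x, hx1, hx⟩ | ⟨x, _, hx⟩) | ⟨x, _, hx⟩) | ⟨e, _, hx⟩
      · injection hx with h1 h2; injection h2 with h3 _; exact h3 ▸ hx1
      · injection hx with h1 _; exact absurd h1 (by decide)
      · injection hx with h1 _; exact absurd h1 (by decide)
      · injection hx with h1 _; exact absurd h1 (by decide)
    · intro h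
      exact Finset.mem_union_left _ (Finset.mem_union_left _ (Finset.mem_union_left _
        (Finset.mem_image.2 ⟨a, h, rfl⟩)))
  have hDB : ∀ b : V, ((⟨1,[b]⟩ : DBTup (Fin 4) V) ∈ D) ↔ b ∈ insert y0 VB := by
    intro b; rw [hD]; constructor
    · intro h
      simp only [Finset.mem_union, Finset.mem_image] at h
      rcases h with ((⟨x, _, hx⟩ | ⟨x, hx1, hx⟩) | ⟨x, _, hx⟩) | ⟨e, _, hx⟩
      · injection hx with h1 _; exact absurd h1 (by decide)
      · injection hx with h1 h2; injection h2 with h3 _; exact h3 ▸ hx1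
      · injection hx with h1 _; exact absurd h1 (by decide)
      · injection hx with h1 _; exact absurd h1 (by decide)
    · intro h
      exact Finset.mem_union_left _ (Finset.mem_union_left _ (Finset.mem_union_right _
        (Finset.mem_image.2 ⟨b, h, rfl⟩)))
  have hDC : ∀ c : V, ((⟨2,[c]⟩ : DBTup (Fin 4) V) ∈ D) ↔ c ∈ insert z0 VC := by
    intro c; rw [hD]; constructor
    · intro h
      simp only [Finset.mem_union, Finset.mem_image] at h
      rcases h with ((⟨x, _, hx⟩ | ⟨x, _, hx⟩) | ⟨x, hx1, hx⟩) | ⟨e, _, hx⟩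
      · injection hx with h1 _; exact absurd h1 (by decide)
      · injection hx with h1 _; exact absurd h1 (by decide)
      · injection hx with h1 h2; injection h2 with h3 _; exact h3 ▸ hx1
      · injection hx with h1 _; exact absurd h1 (by decide)
    · intro h
      exact Finset.mem_union_left _ (Finset.mem_union_right _
        (Finset.mem_image.2 ⟨c, h, rfl⟩))
  have hDW : ∀ a b c : V, ((⟨3,[a,b,c]⟩ : DBTup (Fin 4) V) ∈ D) ↔
      (a,b,c) ∈ insert (x0,y0,z0) E := by
    intro a b c; rw [hD]
    constructor
    · intro h
      simp only [Finset.mem_union, Finset.mem_image] at h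
      rcases h with ((⟨x, _, hx⟩ | ⟨x, _, hx⟩) | ⟨x, _, hx⟩) | ⟨e, he, hee⟩
      · simp [DBTup.mk.injEq] at hx
      · simp [DBTup.mk.injEq] at hx
      · simp [DBTup.mk.injEq] at hx
      · simp only [DBTup.mk.injEq, List.cons.injEq, and_true, true_and] at hee
        have : e = (a, b, c) := by
          obtain ⟨h1, h2, h3⟩ := hee
          exact Prod.ext h1 (Prod.ext h2 h3)
        rwa [this] at he
    · intro h
      exact Finset.mem_union_right _ (Finset.mem_image.2 ⟨(a,b,c), h, rfl⟩)
  -- the canonical "vertex to tuple" map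
  set f : V → DBTup (Fin 4) V :=
    fun v => if v ∈ VA then ⟨0,[v]⟩ else if v ∈ VB then ⟨1,[v]⟩ else ⟨2,[v]⟩ with hfdef
  have hfA : ∀ v ∈ VA, f v = ⟨0,[v]⟩ := by intro v hv; simp [hfdef, hv]
  have hfB : ∀ v, v ∉ VA → v ∈ VB → f v = ⟨1,[v]⟩ := by
    intro v hv1 hv2; simp [hfdef, hv1, hv2]
  have hfC : ∀ v, v ∉ VA → v ∉ VB → f v = ⟨2,[v]⟩ := by
    intro v hv1 hv2; simp [hfdef, hv1, hv2]
  have hfargs : ∀ v, (f v).args = [v] := by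
    intro v; simp only [hfdef]; split_ifs <;> rfl
  have h03 : (0 : Fin 4) ≠ 3 := by decide
  have h13 : (1 : Fin 4) ≠ 3 := by decide
  have h23 : (2 : Fin 4) ≠ 3 := by decide
  have hfrel : ∀ v, (f v).rel ≠ 3 := by
    intro v; simp only [hfdef]; split_ifs
    · exact h03
    · exact h13
    · exact h23
  have hfinj : Function.Injective f := by
    intro u v h
    have h2 := congrArg DBTup.args h
    rw [hfargs, hfargs] at h2
    exact List.head_eq_of_cons_eq h2
  -- Direction 1: every cover size is a contingency size
  have hsub : coverSizes ⊆ contSizes := by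
    rintro n ⟨S, hSsub, hScov, rfl⟩
    have hxS : x0 ∉ S := fun h => by
      have := hSsub h; simp [Finset.mem_union, hxA, hxB, hxC] at this
    have hyS : y0 ∉ S := fun h => by
      have := hSsub h; simp [Finset.mem_union, hyA, hyB, hyC] at this
    have hzS : z0 ∉ S := fun h => by
      have := hSsub h; simp [Finset.mem_union, hzA, hzB, hzC] at this
    have hmemf : ∀ v ∈ S, f v ∈ D := by
      intro v hv
      have hu := hSsub hv
      simp only [Finset.mem_union] at hu
      by_cases h1 : v ∈ VA
      · rw [hfA v h1]; exact (hDA v).2 (Finset.mem_insert_of_mem h1)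
      · by_cases h2 : v ∈ VB
        · rw [hfB v h1 h2]; exact (hDB v).2 (Finset.mem_insert_of_mem h2)
        · have h3 : v ∈ VC := by tauto
          rw [hfC v h1 h2]; exact (hDC v).2 (Finset.mem_insert_of_mem h3)
    have hnotΓ : ∀ v, f v ∉ S.image f → True := fun _ _ => trivial
    refine ⟨S.image f, ?_, ?_, ?_, ?_, ?_⟩
    · intro s hs
      obtain ⟨v, hv, rfl⟩ := Finset.mem_image.1 hs
      exact hmemf v hv
    · intro h
      obtain ⟨v, hv, hfv⟩ := Finset.mem_image.1 h
      have : v = x0 := by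
        have h2 := congrArg DBTup.args hfv
        rw [hfargs] at h2
        exact List.head_eq_of_cons_eq h2
      exact hxS (this ▸ hv)
    · rw [show (q : Finset (DBAtom (Fin 4) (Fin 3))) =
        {⟨0, [0], true⟩, ⟨1, [1], true⟩, ⟨2, [2], true⟩, ⟨3, [0, 1, 2], true⟩} from rfl,
        dbSat_iff']
      refine ⟨x0, y0, z0, ?_, ?_, ?_, ?_⟩ <;> rw [Finset.mem_sdiff]
      · refine ⟨(hDA x0).2 (Finset.mem_insert_self _ _), ?_⟩
        intro h
        obtain ⟨v, hv, hfv⟩ := Finset.mem_image.1 h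
        have : v = x0 := by
          have h2 := congrArg DBTup.args hfv; rw [hfargs] at h2
          exact List.head_eq_of_cons_eq h2
        exact hxS (this ▸ hv)
      · refine ⟨(hDB y0).2 (Finset.mem_insert_self _ _), ?_⟩
        intro h
        obtain ⟨v, hv, hfv⟩ := Finset.mem_image.1 h
        have : v = y0 := by
          have h2 := congrArg DBTup.args hfv; rw [hfargs] at h2
          exact List.head_eq_of_cons_eq h2
        exact hyS (this ▸ hv)
      · refine ⟨(hDC z0).2 (Finset.mem_insert_self _ _), ?_⟩
        intro h
        obtain ⟨v, hv, hfv⟩ := Finset.mem_image.1 h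
        have : v = z0 := by
          have h2 := congrArg DBTup.args hfv; rw [hfargs] at h2
          exact List.head_eq_of_cons_eq h2
        exact hzS (this ▸ hv)
      · refine ⟨(hDW x0 y0 z0).2 (Finset.mem_insert_self _ _), ?_⟩
        intro h
        obtain ⟨v, hv, hfv⟩ := Finset.mem_image.1 h
        exact hfrel v (by rw [hfv])
    · rw [show (q : Finset (DBAtom (Fin 4) (Fin 3))) =
        {⟨0, [0], true⟩, ⟨1, [1], true⟩, ⟨2, [2], true⟩, ⟨3, [0, 1, 2], true⟩} from rfl,
        dbSat_iff']
      rintro ⟨a, b, c, h1, h2, h3, h4⟩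
      rw [Finset.mem_erase, Finset.mem_sdiff] at h1 h2 h3 h4
      have hw := (hDW a b c).1 h4.2.1
      rcases Finset.mem_insert.1 hw with heq | hmem
      · -- (a,b,c) = (x0,y0,z0), so the A-atom is t0, contradiction
        have ha : a = x0 := congrArg (fun p => p.1) heq
        exact h1.1 (by rw [ha])
      · rcases hScov _ hmem with hs | hs | hs
        · have haA : a ∈ VA := (hE _ hmem).1
          exact h1.2.2 (Finset.mem_image.2 ⟨a, hs, hfA a haA⟩)
        · have hbB : b ∈ VB := (hE _ hmem).2.1
          have hbA : b ∉ VA := fun hh => (Finset.disjoint_left.1 hAB) hh hbB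
          exact h2.2.2 (Finset.mem_image.2 ⟨b, hs, hfB b hbA hbB⟩)
        · have hcC : c ∈ VC := (hE _ hmem).2.2
          have hcA : c ∉ VA := fun hh => (Finset.disjoint_left.1 hAC) hh hcC
          have hcB : c ∉ VB := fun hh => (Finset.disjoint_left.1 hBC) hh hcC
          exact h3.2.2 (Finset.mem_image.2 ⟨c, hs, hfC c hcA hcB⟩)
    · exact Finset.card_image_of_injective S hfinj
  -- Direction 2: from a contingency set, extract a cover of at most the same size
  have hdir2 : ∀ n ∈ contSizes, ∃ m ∈ coverSizes, m ≤ n := by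
    rintro n ⟨Γ, hΓsub, ht0Γ, hsat, hnsat, rfl⟩
    set Wt : V × V × V → DBTup (Fin 4) V := fun e => ⟨3, [e.1, e.2.1, e.2.2]⟩ with hWt
    set S : Finset V := (VA ∪ VB ∪ VC).filter
      (fun v => f v ∈ Γ ∨ ∃ e ∈ E, e.1 = v ∧ Wt e ∈ Γ) with hSdef
    have hSsub : S ⊆ VA ∪ VB ∪ VC := Finset.filter_subset _ _
    have hnsat' : ¬ ∃ a b c : V, (⟨0,[a]⟩ : DBTup (Fin 4) V) ∈ (D \ Γ).erase t0 ∧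
        (⟨1,[b]⟩ : DBTup (Fin 4) V) ∈ (D \ Γ).erase t0 ∧
        (⟨2,[c]⟩ : DBTup (Fin 4) V) ∈ (D \ Γ).erase t0 ∧
        (⟨3,[a,b,c]⟩ : DBTup (Fin 4) V) ∈ (D \ Γ).erase t0 := by
      intro h
      exact hnsat ((dbSat_iff' _).2 h)
    have hScov : ∀ e ∈ E, e.1 ∈ S ∨ e.2.1 ∈ S ∨ e.2.2 ∈ S := by
      intro e he
      obtain ⟨haA, hbB, hcC⟩ := hE e he
      by_contra hcon
      push_neg at hcon
      obtain ⟨hc1, hc2, hc3⟩ := hcon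
      -- none of the four tuples of e are in Γ, and none is t0
      have hA' : (⟨0,[e.1]⟩ : DBTup (Fin 4) V) ∉ Γ := by
        intro hg
        refine hc1 (Finset.mem_filter.2 ⟨?_, Or.inl ?_⟩)
        · exact Finset.mem_union_left _ (Finset.mem_union_left _ haA)
        · rwa [hfA _ haA]
      have hB' : (⟨1,[e.2.1]⟩ : DBTup (Fin 4) V) ∉ Γ := by
        intro hg
        have hbA : e.2.1 ∉ VA := fun hh => (Finset.disjoint_left.1 hAB) hh hbB
        refine hc2 (Finset.mem_filter.2 ⟨?_, Or.inl ?_⟩)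
        · exact Finset.mem_union_left _ (Finset.mem_union_right _ hbB)
        · rwa [hfB _ hbA hbB]
      have hC' : (⟨2,[e.2.2]⟩ : DBTup (Fin 4) V) ∉ Γ := by
        intro hg
        have hcA : e.2.2 ∉ VA := fun hh => (Finset.disjoint_left.1 hAC) hh hcC
        have hcB : e.2.2 ∉ VB := fun hh => (Finset.disjoint_left.1 hBC) hh hcC
        refine hc3 (Finset.mem_filter.2 ⟨?_, Or.inl ?_⟩)
        · exact Finset.mem_union_right _ hcC
        · rwa [hfC _ hcA hcB]
      have hW' : Wt e ∉ Γ := by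
        intro hg
        refine hc1 (Finset.mem_filter.2 ⟨?_, Or.inr ⟨e, he, rfl, hg⟩⟩)
        exact Finset.mem_union_left _ (Finset.mem_union_left _ haA)
      refine hnsat' ⟨e.1, e.2.1, e.2.2, ?_, ?_, ?_, ?_⟩
      · rw [Finset.mem_erase, Finset.mem_sdiff]
        refine ⟨?_, (hDA _).2 (Finset.mem_insert_of_mem haA), hA'⟩
        intro hh
        have : e.1 = x0 := by
          have h2 := congrArg DBTup.args hh
          exact List.head_eq_of_cons_eq h2
        exact hxA (this ▸ haA)
      · rw [Finset.mem_erase, Finset.mem_sdiff]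
        refine ⟨?_, (hDB _).2 (Finset.mem_insert_of_mem hbB), hB'⟩
        intro hh
        have := congrArg DBTup.rel hh
        simp [t0] at this
      · rw [Finset.mem_erase, Finset.mem_sdiff]
        refine ⟨?_, (hDC _).2 (Finset.mem_insert_of_mem hcC), hC'⟩
        intro hh
        have := congrArg DBTup.rel hh
        simp [t0] at this
      · rw [Finset.mem_erase, Finset.mem_sdiff]
        refine ⟨?_, (hDW _ _ _).2 (Finset.mem_insert_of_mem he), hW'⟩
        intro hh
        have := congrArg DBTup.rel hh
        simp [t0] at this
    -- now bound |S| ≤ |Γ|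
    set g : V → DBTup (Fin 4) V := fun v =>
      if f v ∈ Γ then f v
      else if h : ∃ e, e ∈ E ∧ e.1 = v ∧ Wt e ∈ Γ then Wt h.choose else f v with hgdef
    have hg : ∀ v ∈ S, (g v = f v ∧ f v ∈ Γ) ∨
        ∃ e, e ∈ E ∧ e.1 = v ∧ Wt e ∈ Γ ∧ g v = Wt e := by
      intro v hv
      obtain ⟨-, hv2⟩ := Finset.mem_filter.1 hv
      by_cases h1 : f v ∈ Γ
      · left; exact ⟨by simp [hgdef, h1], h1⟩
      · right
        have hex : ∃ e ∈ E, e.1 = v ∧ Wt e ∈ Γ := by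
          rcases hv2 with h | ⟨e, he, h2, h3⟩
          · exact absurd h h1
          · exact ⟨e, he, h2, h3⟩
        obtain ⟨he1, he2, he3⟩ := hex.choose_spec
        refine ⟨hex.choose, he1, he2, he3, ?_⟩
        simp only [hgdef]
        rw [if_neg h1, dif_pos hex]
    have hWtrel : ∀ e : V × V × V, (Wt e).rel = 3 := fun e => rfl
    have hWtargs : ∀ e : V × V × V, (Wt e).args = [e.1, e.2.1, e.2.2] := fun e => rfl
    have hcard : S.card ≤ Γ.card := by
      apply Finset.card_le_card_of_injOn g
      · intro v hv
        rcases hg v hv with ⟨h1, h2⟩ | ⟨e, _, _, h3, h4⟩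
        · rw [h1]; exact h2
        · rw [h4]; exact h3
      · intro u hu v hv huv
        rcases hg u hu with ⟨hu1, hu2⟩ | ⟨e, he1, he2, he3, he4⟩ <;>
          rcases hg v hv with ⟨hv1, hv2⟩ | ⟨e', hf1, hf2, hf3, hf4⟩
        · rw [hu1, hv1] at huv; exact hfinj huv
        · rw [hu1, hf4] at huv
          exact absurd ((congrArg DBTup.rel huv).trans (hWtrel e')) (hfrel u)
        · rw [he4, hv1] at huv
          exact absurd ((congrArg DBTup.rel huv.symm).trans (hWtrel e)) (hfrel v)
        · rw [he4, hf4] at huv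
          have h2 := congrArg DBTup.args huv
          rw [hWtargs, hWtargs] at h2
          have : e.1 = e'.1 := List.head_eq_of_cons_eq h2
          rw [← he2, ← hf2, this]
    exact ⟨S.card, ⟨S, hSsub, hScov, rfl⟩, hcard⟩
  -- put things together
  have hcovne : coverSizes.Nonempty :=
    ⟨(VA ∪ VB ∪ VC).card, VA ∪ VB ∪ VC, subset_rfl,
      fun e he => Or.inl (Finset.mem_union_left _ (Finset.mem_union_left _ (hE e he).1)), rfl⟩
  have hcontne : contSizes.Nonempty := hcovne.mono hsub
  have hmain : sInf contSizes = sInf coverSizes := by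
    apply le_antisymm
    · exact Nat.sInf_le (hsub (Nat.sInf_mem hcovne))
    · obtain ⟨m, hm, hmle⟩ := hdir2 _ (Nat.sInf_mem hcontne)
      exact le_trans (Nat.sInf_le hm) hmle
  exact ⟨hmain, by rw [hmain]⟩
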